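/- If the augmented graph H_{f,B} contains no negative cycle, then f : V × B → A (with budget over-reporting disallowed, i.e., agents can only report B' ≤ B) is implementable: the payments p_{a_i} = Δ_H(i, 0), the shortest-path distance from node i to node 0 in H_{f,B}, satisfy IC (against under-reports of budget), IR, BF, and NPT. -/

import Mathlib

noncomputable section

open scoped Classical

variable {A : Type*} {N : Type*}

/-- minimum reported budget required to obtain outcome `a` -/
def beta (V : Set (A → ℝ)) (Bud : Set EReal) (f : (A → ℝ) → EReal → A) (a : A) : EReal :=
  sInf {B | B ∈ Bud ∧ ∃ v ∈ V, f v B = a}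

/-- minimum reported value required to obtain outcome `a` -/
def omegaV (V : Set (A → ℝ)) (Bud : Set EReal) (f : (A → ℝ) → EReal → A) (a : A) : EReal :=
  sInf {x : EReal | ∃ v ∈ V, ∃ B ∈ Bud, f v B = a ∧ x = ((v a : ℝ) : EReal)}

def theta (V : Set (A → ℝ)) (Bud : Set EReal) (f : (A → ℝ) → EReal → A) (a : A) : EReal :=
  min (beta V Bud f a) (omegaV V Bud f a)

def delta (V : Set (A → ℝ)) (Bud : Set EReal) (f : (A → ℝ) → EReal → A) (a a' : A) : EReal :=
  sInf {x : EReal | ∃ v ∈ V, ∃ B ∈ Bud, beta V Bud f a' ≤ B ∧ f v B = a ∧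
    x = ((v a - v a' : ℝ) : EReal)}

def deltaHat (V : Set (A → ℝ)) (Bud : Set EReal) (f : (A → ℝ) → EReal → A) (a a' : A) : EReal :=
  sInf {x : EReal | ∃ v ∈ V, ∃ B ∈ Bud, f v B = a ∧ x = ((v a - v a' : ℝ) : EReal)}

/-- arc length of the graph `G_{f,B}` -/
def glen (V : Set (A → ℝ)) (Bud : Set EReal) (f : (A → ℝ) → EReal → A) (a a' : A) : EReal :=
  min (delta V Bud f a a') (theta V Bud f a)

/-- arc length of the graph `Ĝ_{f,B}` -/
def glenHat (V : Set (A → ℝ)) (Bud : Set EReal) (f : (A → ℝ) → EReal → A) (a a' : A) : EReal :=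
  min (deltaHat V Bud f a a') (theta V Bud f a)

/-- length of the closed walk through the nodes of the list `c` -/
def cycLen (l : N → N → EReal) (c : List N) : EReal :=
  ((c.zip (c.rotate 1)).map fun pr => l pr.1 pr.2).sum

def NoNegCycle (l : N → N → EReal) : Prop :=
  ∀ c : List N, c ≠ [] → 0 ≤ cycLen l c

def pathLen (l : N → N → EReal) : List N → EReal
  | [] => 0
  | [_] => 0
  | x :: y :: t => l x y + pathLen l (y :: t)

/-- shortest-path distance from `i` to `k` in the complete graph with lengths `l` -/
def distG (l : N → N → EReal) (i k : N) : EReal :=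
  sInf (pathLen l '' {c : List N | c.head? = some i ∧ c.getLast? = some k})

def Onto (V : Set (A → ℝ)) (Bud : Set EReal) (f : (A → ℝ) → EReal → A) : Prop :=
  ∀ a : A, ∃ v ∈ V, ∃ B ∈ Bud, f v B = a

def NonnegV (V : Set (A → ℝ)) : Prop := ∀ v ∈ V, ∀ a, 0 ≤ v a

def NonnegB (Bud : Set EReal) : Prop := ∀ B ∈ Bud, 0 ≤ B

/-- `p` gives per-outcome prices implementing `f` : full incentive compatibility
(arbitrary misreports of value and budget), IR, BF and NPT. -/
def Implements (V : Set (A → ℝ)) (Bud : Set EReal) (f : (A → ℝ) → EReal → A)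
    (p : A → ℝ) : Prop :=
  (∀ v ∈ V, ∀ B ∈ Bud, ∀ v' ∈ V, ∀ B' ∈ Bud,
      ((p (f v' B') : ℝ) : EReal) ≤ B →
      v (f v' B') - p (f v' B') ≤ v (f v B) - p (f v B)) ∧
  (∀ v ∈ V, ∀ B ∈ Bud, p (f v B) ≤ v (f v B)) ∧
  (∀ v ∈ V, ∀ B ∈ Bud, ((p (f v B) : ℝ) : EReal) ≤ B) ∧
  (∀ v ∈ V, ∀ B ∈ Bud, 0 ≤ p (f v B))

/-- as `Implements`, but budget over-reporting is impossible: `B' ≤ B`. -/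
def ImplementsNoOver (V : Set (A → ℝ)) (Bud : Set EReal) (f : (A → ℝ) → EReal → A)
    (p : A → ℝ) : Prop :=
  (∀ v ∈ V, ∀ B ∈ Bud, ∀ v' ∈ V, ∀ B' ∈ Bud, B' ≤ B →
      ((p (f v' B') : ℝ) : EReal) ≤ B →
      v (f v' B') - p (f v' B') ≤ v (f v B) - p (f v B)) ∧
  (∀ v ∈ V, ∀ B ∈ Bud, p (f v B) ≤ v (f v B)) ∧
  (∀ v ∈ V, ∀ B ∈ Bud, ((p (f v B) : ℝ) : EReal) ≤ B) ∧
  (∀ v ∈ V, ∀ B ∈ Bud, 0 ≤ p (f v B))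

/-- arcs of the augmented graph `H` : `none` is the special node `0`. -/
def HArc (d : A → A → EReal) : Option A → Option A → Prop
  | some i, some k => d i k < ⊤
  | none, some _ => True
  | some _, none => True
  | none, none => False

/-- arc lengths of the augmented graph `H`. -/
def HLen (d : A → A → EReal) (t : A → EReal) : Option A → Option A → EReal
  | some i, some k => d i k
  | none, some _ => 0
  | some i, none => t i
  | none, none => 0

def NoNegCycleH (d : A → A → EReal) (t : A → EReal) : Prop :=
  ∀ c : List (Option A), c ≠ [] →
    (∀ pr ∈ c.zip (c.rotate 1), HArc d pr.1 pr.2) →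
    0 ≤ cycLen (HLen d t) c

/-- shortest-path distance from node `i` to the special node `0` in `H`. -/
def distH (d : A → A → EReal) (t : A → EReal) (i : A) : EReal :=
  sInf (pathLen (HLen d t) ''
    {c : List (Option A) | c.head? = some (some i) ∧ c.getLast? = some none ∧
      ∀ pr ∈ c.zip c.tail, HArc d pr.1 pr.2})


lemma pathLen_eq_sum {N : Type*} (l : N → N → EReal) : ∀ c : List N,
    pathLen l c = ((c.zip c.tail).map fun pr => l pr.1 pr.2).sum
  | [] => by simp [pathLen]
  | [x] => by simp [pathLen]
  | x :: y :: t => by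
    rw [pathLen, pathLen_eq_sum l (y :: t)]
    simp

lemma zip_rotate' {N : Type*} (b : N) : ∀ (l : List N) (a : N),
    (a :: l).zip (l ++ [b]) = (a :: l).zip l ++ [((a :: l).getLast (by simp), b)]
  | [], a => by simp
  | x :: t, a => by
    have h := zip_rotate' b t x
    simp only [List.cons_append, List.zip_cons_cons, h, List.getLast_cons (List.cons_ne_nil x t)]

lemma cycLen_eq {N : Type*} (l : N → N → EReal) (a : N) (c : List N) :
    cycLen l (a :: c) = pathLen l (a :: c) + l ((a :: c).getLast (by simp)) a := by
  have hrot : (a :: c).rotate 1 = c ++ [a] := by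
    rw [show (1:ℕ) = 0 + 1 from rfl, List.rotate_cons_succ, List.rotate_zero]
  rw [cycLen, hrot, zip_rotate' a c a, List.map_append, List.sum_append, pathLen_eq_sum]
  simp

/-- sufficiency with no budget over-reporting. If `H_{f,B}` has no
negative cycle, then the shortest-path payments `p_{a_i} = Δ_H(i,0)` implement `f`
(IC against reports with `B' ≤ B`, IR, BF, NPT). -/
theorem stmt7 {A : Type*} (V : Set (A → ℝ)) (Bud : Set EReal)
    (f : (A → ℝ) → EReal → A)
    (hV : NonnegV V) (hB : NonnegB Bud) (honto : Onto V Bud f)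
    (hH : NoNegCycleH (delta V Bud f) (theta V Bud f)) :
    ∃ p : A → ℝ,
      (∀ a : A, ((p a : ℝ) : EReal) = distH (delta V Bud f) (theta V Bud f) a) ∧
      ImplementsNoOver V Bud f p := by
  classical
  set d := delta V Bud f with hd
  set t := theta V Bud f with ht
  -- theta is never ⊤
  have htop : ∀ a : A, t a < ⊤ := by
    intro a
    obtain ⟨v, hv, B, hBm, hfa⟩ := honto a
    have h1 : omegaV V Bud f a ≤ ((v a : ℝ) : EReal) :=
      sInf_le ⟨v, hv, B, hBm, hfa, rfl⟩
    exact lt_of_le_of_lt (le_trans (min_le_right _ _) h1) (EReal.coe_lt_top _)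
  -- every admissible path has nonnegative length
  have hpath_nonneg : ∀ (a : A) (c : List (Option A)), c.head? = some (some a) →
      c.getLast? = some none → (∀ pr ∈ c.zip c.tail, HArc d pr.1 pr.2) →
      0 ≤ pathLen (HLen d t) c := by
    intro a c hhead hlast harcs
    match c, hhead with
    | x :: c', hhead =>
      have hx : x = some a := by simpa using hhead
      subst hx
      have hgl : (some a :: c').getLast (by simp) = none := by
        have := List.getLast?_eq_getLast (by simp : some a :: c' ≠ [])
        rw [this] at hlast
        exact Option.some_injective _ hlast
      have hrot : (some a :: c').rotate 1 = c' ++ [some a] := by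
        rw [show (1:ℕ) = 0 + 1 from rfl, List.rotate_cons_succ, List.rotate_zero]
      have hz : (some a :: c').zip ((some a :: c').rotate 1)
          = (some a :: c').zip c' ++ [((some a :: c').getLast (by simp), some a)] := by
        rw [hrot, zip_rotate']
      have hcyc := hH (some a :: c') (by simp) (by
        intro pr hpr
        rw [hz] at hpr
        rcases List.mem_append.mp hpr with h | h
        · exact harcs pr h
        · have : pr = ((some a :: c').getLast (by simp), some a) := by simpa using h
          rw [this, hgl]
          trivial)
      rw [cycLen_eq, hgl] at hcyc
      simpa [HLen] using hcyc
  have hnn : ∀ a : A, 0 ≤ distH d t a := by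
    intro a
    refine le_sInf ?_
    rintro x ⟨c, ⟨h1, h2, h3⟩, rfl⟩
    exact hpath_nonneg a c h1 h2 h3
  have hle : ∀ a : A, distH d t a ≤ t a := by
    intro a
    have hmem : pathLen (HLen d t) [some a, none] ∈ pathLen (HLen d t) ''
        {c : List (Option A) | c.head? = some (some a) ∧ c.getLast? = some none ∧
          ∀ pr ∈ c.zip c.tail, HArc d pr.1 pr.2} := by
      refine ⟨[some a, none], ⟨rfl, rfl, ?_⟩, rfl⟩
      intro pr hpr
      have : pr = ((some a : Option A), (none : Option A)) := by simpa using hpr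
      rw [this]; trivial
    rw [distH]
    have := sInf_le hmem
    simpa [pathLen, HLen] using this
  have hnetop : ∀ a : A, distH d t a ≠ ⊤ := fun a =>
    ne_top_of_lt (lt_of_le_of_lt (hle a) (htop a))
  have hnebot : ∀ a : A, distH d t a ≠ ⊥ := fun a =>
    ne_bot_of_le_ne_bot (by simp) (hnn a)
  refine ⟨fun a => (distH d t a).toReal, fun a => EReal.coe_toReal (hnetop a) (hnebot a), ?_, ?_, ?_, ?_⟩
  · -- IC
    intro v hv B hBm v' hv' B' hB'm hBB' _hple
    set a := f v B with haeq
    set a' := f v' B' with ha'eq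
    set pa := (distH d t a).toReal with hpa
    set pa' := (distH d t a').toReal with hpa'
    have hcoe : ((pa : ℝ) : EReal) = distH d t a := EReal.coe_toReal (hnetop a) (hnebot a)
    have hcoe' : ((pa' : ℝ) : EReal) = distH d t a' := EReal.coe_toReal (hnetop a') (hnebot a')
    have hbeta' : beta V Bud f a' ≤ B := by
      refine le_trans (sInf_le ⟨hB'm, v', hv', rfl⟩) hBB'
    have hdle : d a a' ≤ ((v a - v a' : ℝ) : EReal) :=
      sInf_le ⟨v, hv, B, hBm, hbeta', rfl, rfl⟩
    have hdtop : d a a' < ⊤ := lt_of_le_of_lt hdle (EReal.coe_lt_top _)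
    have hdbot : d a a' ≠ ⊥ := by
      intro hbot
      have harcs : ∀ pr ∈ ([some a, some a', none] : List (Option A)).zip
          (([some a, some a', none] : List (Option A)).rotate 1), HArc d pr.1 pr.2 := by
        have hrot : (([some a, some a', none] : List (Option A)).rotate 1)
            = [some a', none, some a] := rfl
        intro pr hpr
        rw [hrot] at hpr
        have : pr = ((some a : Option A), (some a' : Option A)) ∨
            pr = ((some a' : Option A), (none : Option A)) ∨
            pr = ((none : Option A), (some a : Option A)) := by simpa using hpr
        rcases this with rfl | rfl | rfl
        · exact hdtop
        · trivial
        · trivial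
      have hcyc := hH [some a, some a', none] (by simp) harcs
      have hrot : (([some a, some a', none] : List (Option A)).rotate 1)
          = [some a', none, some a] := rfl
      rw [cycLen, hrot] at hcyc
      simp only [List.zip_cons_cons, List.zip_nil_right, List.map, List.sum_cons,
        List.sum_nil] at hcyc
      rw [show HLen d t (some a) (some a') = d a a' from rfl, hbot] at hcyc
      simp [EReal.bot_add] at hcyc
    have hdr : d a a' = (((d a a').toReal : ℝ) : EReal) :=
      (EReal.coe_toReal (ne_top_of_lt hdtop) hdbot).symm
    set dr := (d a a').toReal with hdrdef
    have hdrle : dr ≤ v a - v a' := by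
      rw [hdr] at hdle
      exact_mod_cast hdle
    -- triangle inequality via ε-approximation
    have hkey : ∀ ε : ℝ, 0 < ε → pa ≤ dr + pa' + ε := by
      intro ε hε
      have hlt : distH d t a' < ((pa' + ε : ℝ) : EReal) := by
        rw [← hcoe']
        exact_mod_cast (by linarith : pa' < pa' + ε)
      rw [distH] at hlt
      obtain ⟨x, hx, hxlt⟩ := sInf_lt_iff.mp hlt
      obtain ⟨c, ⟨hc1, hc2, hc3⟩, rfl⟩ := hx
      match c, hc1 with
      | y :: c'', hc1 =>
        have hy : y = some a' := by simpa using hc1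
        subst hy
        have hmem : pathLen (HLen d t) (some a :: some a' :: c'') ∈ pathLen (HLen d t) ''
            {c : List (Option A) | c.head? = some (some a) ∧ c.getLast? = some none ∧
              ∀ pr ∈ c.zip c.tail, HArc d pr.1 pr.2} := by
          refine ⟨some a :: some a' :: c'', ⟨rfl, by rw [List.getLast?_cons_cons]; exact hc2, ?_⟩, rfl⟩
          intro pr hpr
          simp only [List.tail_cons, List.zip_cons_cons, List.mem_cons] at hpr
          rcases hpr with rfl | h
          · exact hdtop
          · exact hc3 pr (by simpa using h)
        have h1 : distH d t a ≤ pathLen (HLen d t) (some a :: some a' :: c'') := sInf_le hmem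
        have h2 : pathLen (HLen d t) (some a :: some a' :: c'')
            = d a a' + pathLen (HLen d t) (some a' :: c'') := rfl
        have h3 : distH d t a ≤ d a a' + ((pa' + ε : ℝ) : EReal) := by
          rw [h2] at h1
          exact le_trans h1 (add_le_add le_rfl hxlt.le)
        rw [← hcoe, hdr] at h3
        have h4 : ((pa : ℝ) : EReal) ≤ ((dr + (pa' + ε) : ℝ) : EReal) := by
          rw [EReal.coe_add]
          exact h3
        have := EReal.coe_le_coe_iff.mp h4
        linarith
    have hfin : pa ≤ dr + pa' := by
      by_contra hcon
      push_neg at hcon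
      have := hkey ((pa - dr - pa') / 2) (by linarith)
      linarith
    linarith
  · -- IR
    intro v hv B hBm
    set a := f v B
    have h1 : distH d t a ≤ ((v a : ℝ) : EReal) :=
      le_trans (hle a) (le_trans (min_le_right _ _) (sInf_le ⟨v, hv, B, hBm, rfl, rfl⟩))
    have hcoe : (((distH d t a).toReal : ℝ) : EReal) = distH d t a :=
      EReal.coe_toReal (hnetop a) (hnebot a)
    rw [← hcoe] at h1
    exact_mod_cast h1
  · -- BF
    intro v hv B hBm
    set a := f v B
    have h1 : distH d t a ≤ B :=
      le_trans (hle a) (le_trans (min_le_left _ _) (sInf_le ⟨hBm, v, hv, rfl⟩))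
    have hcoe : (((distH d t a).toReal : ℝ) : EReal) = distH d t a :=
      EReal.coe_toReal (hnetop a) (hnebot a)
    rw [hcoe]
    exact h1
  · -- NPT
    intro v hv B hBm
    have h := hnn (f v B)
    have hcoe : (((distH d t (f v B)).toReal : ℝ) : EReal) = distH d t (f v B) :=
      EReal.coe_toReal (hnetop _) (hnebot _)
    rw [← hcoe] at h
    exact_mod_cast h
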